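/- Let μ be a compactly supported Borel probability measure on ℝ and let D_μ := sup{|x - y| : x, y ∈ supp(μ)} be the diameter of its support. Then for every t > 0 with t² ≥ (3√10/2)·D_μ (equivalently t ≥ (90/4)^{1/4}·D_μ^{1/2}), the function ℓ_{μ,t}(x) = ∫_ℝ h_t(x-y) dμ(y) is unimodal; consequently the convolution μ * L_t is unimodal for all such t. -/

import Mathlib

open MeasureTheory Real Set Filter Topology

/-- A function `f : ℝ → ℝ` is unimodal if there is a mode `a` such that `f` is
nondecreasing on `(-∞, a]` and nonincreasing on `[a, ∞)`. -/
def Unimodal (f : ℝ → ℝ) : Prop :=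
  ∃ a : ℝ, MonotoneOn f (Set.Iic a) ∧ AntitoneOn f (Set.Ici a)

/-- The topological support of a Borel measure on `ℝ`: the set of points all of whose
neighbourhoods have positive measure. -/
def measureSupport (μ : Measure ℝ) : Set ℝ := {x | ∀ U ∈ nhds x, 0 < μ U}

/-- The density kernel of the Lévy distribution (one-sided `1/2`-stable law) of parameter `t`,
up to the constant factor `t/√(2π)`: `u ↦ u^{-3/2} exp(-t²/(2u))` for `u > 0`, and `0` otherwise. -/
noncomputable def levyKernel (t u : ℝ) : ℝ :=
  if 0 < u then u ^ (-(3 : ℝ) / 2) * Real.exp (-t ^ 2 / (2 * u)) else 0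

namespace LevyAux

noncomputable def G (t u : ℝ) : ℝ := -3/2 * Real.log u + -(t^2/2) * u⁻¹
noncomputable def G1 (t u : ℝ) : ℝ := -3/2 * u⁻¹ + (t^2/2) * (u^2)⁻¹
noncomputable def G2 (t u : ℝ) : ℝ := (3/2) * (u^2)⁻¹ + -(t^2) * (u^3)⁻¹

lemma kernel_eq {t u : ℝ} (hu : 0 < u) : levyKernel t u = Real.exp (G t u) := by
  unfold levyKernel G
  rw [if_pos hu, Real.rpow_def_of_pos hu, ← Real.exp_add]
  congr 1
  field_simp

lemma hasDerivAt_G {t u : ℝ} (hu : u ≠ 0) : HasDerivAt (G t) (G1 t u) u := by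
  have h1 := (Real.hasDerivAt_log hu).const_mul (-(3:ℝ)/2)
  have h2 := (hasDerivAt_inv hu).const_mul (-(t^2/2))
  have e : -(3:ℝ)/2 * u⁻¹ + -(t^2/2) * -(u^2)⁻¹ = G1 t u := by
    unfold G1; ring
  exact e ▸ (h1.add h2)

lemma hasDerivAt_G1 {t u : ℝ} (hu : u ≠ 0) : HasDerivAt (G1 t) (G2 t u) u := by
  have h1 := (hasDerivAt_inv hu).const_mul (-(3:ℝ)/2)
  have hsq : HasDerivAt (fun u : ℝ => (u^2)⁻¹) (-(2*u^1) / (u^2)^2) u :=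
    (hasDerivAt_pow 2 u).inv (pow_ne_zero 2 hu)
  have h2 := hsq.const_mul (t^2/2)
  have e : -(3:ℝ)/2 * -(u^2)⁻¹ + t^2/2 * (-(2*u^1) / (u^2)^2) = G2 t u := by
    unfold G2; field_simp
  exact e ▸ (h1.add h2)

lemma G1_eq {t u : ℝ} (hu : u ≠ 0) : G1 t u = (t^2 - 3*u)/(2*u^2) := by
  unfold G1; field_simp; ring

lemma sqrt10_ge : (3:ℝ) ≤ Real.sqrt 10 := by
  nlinarith [Real.sq_sqrt (by norm_num : (0:ℝ) ≤ 10), Real.sqrt_nonneg 10]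

/-- On the window the kernel's log-derivative data satisfies the concavity inequality. -/
lemma key_window_pos {t d : ℝ} (ht0 : 0 < t) (hd0 : 0 ≤ d)
    (hd : 3 * Real.sqrt 10 / 2 * d ≤ t ^ 2) : 0 < t^2/3 - d := by
  have h9 : 9/2 * d ≤ t^2 := le_trans (by nlinarith [sqrt10_ge]) hd
  nlinarith [pow_pos ht0 2]

lemma key_ineq {t d u : ℝ} (ht0 : 0 < t) (hd0 : 0 ≤ d)
    (hd : 3 * Real.sqrt 10 / 2 * d ≤ t ^ 2)
    (hu : u ∈ Icc (t^2/3 - d) (t^2/3 + d)) : G2 t u + (G1 t u)^2 ≤ 0 := by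
  have hu0 : 0 < u := lt_of_lt_of_le (key_window_pos ht0 hd0 hd) hu.1
  have hd2 : 45 * d^2 ≤ 2 * t^4 := by
    have hsq := Real.sq_sqrt (by norm_num : (0:ℝ) ≤ 10)
    have hmul := mul_le_mul hd hd (by positivity) (by positivity)
    nlinarith [hmul, hsq]
  have hwin : (u - t^2/3)^2 ≤ d^2 := by nlinarith [hu.1, hu.2]
  have heq : G2 t u + (G1 t u)^2 = (15*u^2 - 10*t^2*u + t^4) / (4*u^4) := by
    unfold G1 G2; field_simp; ring
  rw [heq]
  apply div_nonpos_of_nonpos_of_nonneg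
  · nlinarith [hwin, hd2]
  · positivity

lemma kernel_concave {t d : ℝ} (ht0 : 0 < t) (hd0 : 0 ≤ d)
    (hd : 3 * Real.sqrt 10 / 2 * d ≤ t ^ 2) :
    ConcaveOn ℝ (Icc (t^2/3 - d) (t^2/3 + d)) (levyKernel t) := by
  set W := Icc (t^2/3 - d) (t^2/3 + d) with hW
  have hpos : ∀ u ∈ W, 0 < u := fun u hu =>
    lt_of_lt_of_le (key_window_pos ht0 hd0 hd) hu.1
  have hF : ConcaveOn ℝ W (fun u => Real.exp (G t u)) := by
    apply concaveOn_of_hasDerivWithinAt2_nonpos (f' := fun u => Real.exp (G t u) * G1 t u)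
      (f'' := fun u => (G2 t u + (G1 t u)^2) * Real.exp (G t u)) (convex_Icc _ _)
    · intro u hu
      exact (((hasDerivAt_G (hpos u hu).ne').exp).continuousAt).continuousWithinAt
    · intro u hu
      have hu' := hpos u (interior_subset hu)
      exact ((hasDerivAt_G hu'.ne').exp).hasDerivWithinAt
    · intro u hu
      have hu' := hpos u (interior_subset hu)
      have h := ((hasDerivAt_G (t := t) hu'.ne').exp).mul (hasDerivAt_G1 (t := t) hu'.ne')
      have e : Real.exp (G t u) * G1 t u * G1 t u + Real.exp (G t u) * G2 t u
          = (G2 t u + (G1 t u)^2) * Real.exp (G t u) := by ring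
      exact (e ▸ h).hasDerivWithinAt
    · intro u hu
      have hu' := interior_subset hu
      have : u ∈ Icc (t^2/3 - d) (t^2/3 + d) := hu'
      exact mul_nonpos_of_nonpos_of_nonneg (key_ineq ht0 hd0 hd this) (Real.exp_nonneg _)
  exact hF.congr (fun u hu => (kernel_eq (hpos u hu)).symm)

lemma kernel_nonneg (t u : ℝ) : 0 ≤ levyKernel t u := by
  unfold levyKernel
  split
  · exact mul_nonneg (Real.rpow_nonneg (le_of_lt (by assumption)) _) (Real.exp_nonneg _)
  · exact le_refl 0

lemma kernel_monotone {t : ℝ} (ht0 : 0 < t) : MonotoneOn (levyKernel t) (Iic (t^2/3)) := by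
  have hGmono : MonotoneOn (G t) (Ioc 0 (t^2/3)) := by
    apply monotoneOn_of_deriv_nonneg (convex_Ioc _ _)
    · intro u hu
      exact ((hasDerivAt_G (ne_of_gt hu.1)).continuousAt).continuousWithinAt
    · intro u hu
      rw [interior_Ioc] at hu
      exact ((hasDerivAt_G (ne_of_gt hu.1)).differentiableAt).differentiableWithinAt
    · intro u hu
      rw [interior_Ioc] at hu
      rw [(hasDerivAt_G (ne_of_gt hu.1)).deriv]
      rw [G1_eq (ne_of_gt hu.1)]
      apply div_nonneg _ (by positivity)
      nlinarith [hu.2]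
  intro u hu v hv huv
  rcases le_or_gt u 0 with h0 | h0
  · have : levyKernel t u = 0 := by unfold levyKernel; rw [if_neg (not_lt.2 h0)]
    rw [this]; exact kernel_nonneg t v
  · have hv0 : 0 < v := lt_of_lt_of_le h0 huv
    rw [kernel_eq h0, kernel_eq hv0]
    exact Real.exp_le_exp.2 (hGmono ⟨h0, hu⟩ ⟨hv0, hv⟩ huv)

lemma kernel_antitone {t : ℝ} (ht0 : 0 < t) : AntitoneOn (levyKernel t) (Ici (t^2/3)) := by
  have hm : (0:ℝ) < t^2/3 := by positivity
  have hGanti : AntitoneOn (G t) (Ici (t^2/3)) := by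
    apply antitoneOn_of_deriv_nonpos (convex_Ici _)
    · intro u hu
      exact ((hasDerivAt_G (ne_of_gt (lt_of_lt_of_le hm hu))).continuousAt).continuousWithinAt
    · intro u hu
      rw [interior_Ici] at hu
      exact ((hasDerivAt_G (ne_of_gt (lt_trans hm hu))).differentiableAt).differentiableWithinAt
    · intro u hu
      rw [interior_Ici] at hu
      have hu0 : 0 < u := lt_trans hm hu
      rw [(hasDerivAt_G (ne_of_gt hu0)).deriv, G1_eq (ne_of_gt hu0)]
      have hu2 : t^2/3 < u := hu
      apply div_nonpos_of_nonpos_of_nonneg _ (by positivity)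
      nlinarith [hu2]
  intro u hu v hv huv
  have hu0 : 0 < u := lt_of_lt_of_le hm hu
  have hv0 : 0 < v := lt_of_lt_of_le hm hv
  rw [kernel_eq hu0, kernel_eq hv0]
  exact Real.exp_le_exp.2 (hGanti hu hv huv)

lemma kernel_le_max {t : ℝ} (ht0 : 0 < t) (u : ℝ) :
    levyKernel t u ≤ levyKernel t (t^2/3) := by
  rcases le_total u (t^2/3) with h | h
  · exact kernel_monotone ht0 h (self_mem_Iic) h
  · exact kernel_antitone ht0 (self_mem_Ici) h h

lemma kernel_eq_indicator (t : ℝ) :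
    levyKernel t = (Ioi 0).indicator (fun u => Real.exp (G t u)) := by
  funext u
  rcases lt_or_ge 0 u with h | h
  · rw [kernel_eq h, Set.indicator_of_mem (mem_Ioi.2 h)]
  · rw [Set.indicator_of_notMem (by simpa using h)]
    unfold levyKernel
    rw [if_neg (not_lt.2 h)]

lemma kernel_measurable (t : ℝ) : Measurable (levyKernel t) := by
  rw [kernel_eq_indicator]
  exact Measurable.indicator
    (((Real.measurable_log.const_mul _).add (measurable_inv.const_mul _)).exp)
    measurableSet_Ioi

lemma kernel_continuousAt {t u : ℝ} (hu : 0 < u) : ContinuousAt (levyKernel t) u := by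
  have hev : levyKernel t =ᶠ[nhds u] fun v => Real.exp (G t v) := by
    filter_upwards [Ioi_mem_nhds hu] with v hv
    exact kernel_eq hv
  exact ((hasDerivAt_G (ne_of_gt hu)).exp.continuousAt).congr hev.symm

lemma support_closed (μ : Measure ℝ) :
    IsClosed {x : ℝ | ∀ U ∈ nhds x, 0 < μ U} := by
  rw [← isOpen_compl_iff, isOpen_iff_mem_nhds]
  intro x hx
  simp only [mem_compl_iff, mem_setOf_eq, not_forall] at hx
  obtain ⟨U, hU, hU0⟩ := hx
  have hU0' : μ U = 0 := nonpos_iff_eq_zero.1 (not_lt.1 hU0)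
  obtain ⟨V, hVU, hVopen, hxV⟩ := mem_nhds_iff.1 hU
  apply Filter.mem_of_superset (hVopen.mem_nhds hxV)
  intro y hy
  simp only [mem_compl_iff, mem_setOf_eq, not_forall]
  exact ⟨V, hVopen.mem_nhds hy,
    not_lt.2 (le_of_le_of_eq (measure_mono hVU) hU0')⟩

lemma support_compl_null (μ : Measure ℝ) :
    μ {x : ℝ | ∀ U ∈ nhds x, 0 < μ U}ᶜ = 0 := by
  have hcover : {x : ℝ | ∀ U ∈ nhds x, 0 < μ U}ᶜ
      ⊆ ⋃₀ {b ∈ TopologicalSpace.countableBasis ℝ | μ b = 0} := by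
    intro x hx
    simp only [mem_compl_iff, mem_setOf_eq, not_forall] at hx
    obtain ⟨U, hU, hU0⟩ := hx
    have hU0' : μ U = 0 := nonpos_iff_eq_zero.1 (not_lt.1 hU0)
    obtain ⟨c, hcB, hxc, hcU⟩ :=
      (TopologicalSpace.isBasis_countableBasis ℝ).mem_nhds_iff.1 hU
    exact ⟨c, ⟨hcB, nonpos_iff_eq_zero.1 (le_of_le_of_eq (measure_mono hcU) hU0')⟩, hxc⟩
  refine measure_mono_null hcover ?_
  rw [measure_sUnion_null_iff
    ((TopologicalSpace.countable_countableBasis ℝ).mono (sep_subset _ _))]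
  exact fun s hs => hs.2

lemma support_nonempty (μ : Measure ℝ) [IsProbabilityMeasure μ] :
    {x : ℝ | ∀ U ∈ nhds x, 0 < μ U}.Nonempty := by
  by_contra h
  rw [not_nonempty_iff_eq_empty] at h
  have h0 := support_compl_null μ
  rw [h, compl_empty, measure_univ] at h0
  exact one_ne_zero h0

end LevyAux

open LevyAux

theorem levy_convolution_unimodal_large_time
    (μ : Measure ℝ) [IsProbabilityMeasure μ]
    (hK : IsCompact (measureSupport μ)) (D : ℝ)
    (hD : D = Metric.diam (measureSupport μ))
    (t : ℝ) (ht0 : 0 < t) (ht : 3 * Real.sqrt 10 / 2 * D ≤ t ^ 2) :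
    Unimodal (fun x => ∫ y, levyKernel t (x - y) ∂μ) := by
  classical
  have hSne : (measureSupport μ).Nonempty := support_nonempty μ
  set b := sInf (measureSupport μ) with hbdef
  set B := sSup (measureSupport μ) with hBdef
  have hbS : b ∈ measureSupport μ := hK.sInf_mem hSne
  have hBS : B ∈ measureSupport μ := hK.sSup_mem hSne
  have hbB : b ≤ B := csInf_le_csSup hSne hK.bddBelow hK.bddAbove
  have hD0 : 0 ≤ D := hD ▸ Metric.diam_nonneg
  have hDdD : B - b ≤ D := by
    have h1 := Metric.dist_le_diam_of_mem hK.isBounded hBS hbS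
    rw [Real.dist_eq] at h1
    calc B - b ≤ |B - b| := le_abs_self _
      _ ≤ D := hD ▸ h1
  set m := t ^ 2 / 3 with hm
  set p := b + m with hpdef
  set q := B + m with hqdef
  have hpq : p ≤ q := by rw [hpdef, hqdef]; linarith
  have hae : ∀ᵐ y ∂μ, y ∈ measureSupport μ := by
    rw [ae_iff]
    exact support_compl_null μ
  have hint : ∀ x : ℝ, Integrable (fun y => levyKernel t (x - y)) μ := by
    intro x
    have hmeas : AEStronglyMeasurable (fun y => levyKernel t (x - y)) μ :=
      ((kernel_measurable t).comp (measurable_const.sub measurable_id)).aestronglyMeasurable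
    refine Integrable.mono' (integrable_const (levyKernel t m)) hmeas ?_
    filter_upwards with y
    rw [Real.norm_eq_abs, abs_of_nonneg (kernel_nonneg _ _)]
    exact kernel_le_max ht0 _
  set l : ℝ → ℝ := fun x => ∫ y, levyKernel t (x - y) ∂μ with hldef
  have monoA : MonotoneOn l (Iic p) := by
    intro x1 h1 x2 h2 h12
    apply integral_mono_ae (hint x1) (hint x2)
    filter_upwards [hae] with y hy
    have hyb : b ≤ y := csInf_le hK.bddBelow hy
    have h2' : x2 ≤ b + m := h2
    exact kernel_monotone ht0 (mem_Iic.2 (by linarith : x1 - y ≤ m))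
      (mem_Iic.2 (by linarith : x2 - y ≤ m)) (by linarith)
  have antiB : AntitoneOn l (Ici q) := by
    intro x1 h1 x2 h2 h12
    apply integral_mono_ae (hint x2) (hint x1)
    filter_upwards [hae] with y hy
    have hyB : y ≤ B := le_csSup hK.bddAbove hy
    have h1' : B + m ≤ x1 := h1
    exact kernel_antitone ht0 (mem_Ici.2 (by linarith : m ≤ x1 - y))
      (mem_Ici.2 (by linarith : m ≤ x2 - y)) (by linarith)
  have hconcW : ConcaveOn ℝ (Icc (m - D) (m + D)) (levyKernel t) :=
    kernel_concave ht0 hD0 ht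
  have hmemW : ∀ x ∈ Icc p q, ∀ y ∈ measureSupport μ, x - y ∈ Icc (m - D) (m + D) := by
    intro x hx y hy
    have hyb : b ≤ y := csInf_le hK.bddBelow hy
    have hyB : y ≤ B := le_csSup hK.bddAbove hy
    have hx1 : b + m ≤ x := hx.1
    have hx2 : x ≤ B + m := hx.2
    exact ⟨by linarith, by linarith⟩
  have hconc : ConcaveOn ℝ (Icc p q) l := by
    refine ⟨convex_Icc _ _, ?_⟩
    intro x hx z hz a c ha hc hac
    have hpt : ∀ᵐ y ∂μ, a * levyKernel t (x - y) + c * levyKernel t (z - y)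
        ≤ levyKernel t ((a • x + c • z) - y) := by
      filter_upwards [hae] with y hy
      have h1 := hmemW x hx y hy
      have h2 := hmemW z hz y hy
      have h3 := hconcW.2 h1 h2 ha hc hac
      simp only [smul_eq_mul] at h3 ⊢
      have e : a * (x - y) + c * (z - y) = (a * x + c * z) - y := by
        linear_combination (-y) * hac
      rw [e] at h3
      exact h3
    have hmono := integral_mono_ae (((hint x).const_mul a).add ((hint z).const_mul c))
      (hint (a • x + c • z)) hpt
    have hsplit : ∫ y, (a * levyKernel t (x - y) + c * levyKernel t (z - y)) ∂μ
        = a * l x + c * l z := by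
      rw [integral_add ((hint x).const_mul a) ((hint z).const_mul c),
        integral_const_mul, integral_const_mul]
    simp only [smul_eq_mul]
    rw [← hsplit]
    exact hmono
  have hcont : ContinuousOn l (Icc p q) := by
    apply continuousOn_of_dominated (bound := fun _ => levyKernel t m)
    · intro x _
      exact ((kernel_measurable t).comp (measurable_const.sub measurable_id)).aestronglyMeasurable
    · intro x _
      filter_upwards with y
      rw [Real.norm_eq_abs, abs_of_nonneg (kernel_nonneg _ _)]
      exact kernel_le_max ht0 _
    · exact integrable_const _
    · filter_upwards [hae] with y hy
      intro x hx
      have hx' := hmemW x hx y hy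
      have hpos : 0 < x - y := lt_of_lt_of_le (key_window_pos ht0 hD0 ht) hx'.1
      have hcx : ContinuousAt (fun x : ℝ => levyKernel t (x - y)) x :=
        ContinuousAt.comp (g := levyKernel t) (f := fun x : ℝ => x - y)
          (kernel_continuousAt hpos) ((continuous_id.sub continuous_const).continuousAt)
      exact hcx.continuousWithinAt
  obtain ⟨a, haI, hamax⟩ := isCompact_Icc.exists_isMaxOn (nonempty_Icc.2 hpq) hcont
  have hmax : ∀ z ∈ Icc p q, l z ≤ l a := fun z hz => hamax hz
  have monoMid : MonotoneOn l (Icc p a) := by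
    intro u hu v hv huv
    have hua : u ≤ a := le_trans huv hv.2
    have hva : v ∈ segment ℝ u a := by
      rw [segment_eq_Icc hua]; exact ⟨huv, hv.2⟩
    obtain ⟨c, e, hc0, he0, hce, hval⟩ := hva
    have huQ : u ∈ Icc p q := ⟨hu.1, le_trans hu.2 haI.2⟩
    calc l u = c * l u + e * l u := by rw [← add_mul, hce, one_mul]
      _ ≤ c * l u + e * l a :=
        add_le_add_right (mul_le_mul_of_nonneg_left (hmax u huQ) he0) _
      _ ≤ l (c • u + e • a) := by
        have h4 := hconc.2 huQ haI hc0 he0 hce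
        simpa [smul_eq_mul] using h4
      _ = l v := by rw [hval]
  have antiMid : AntitoneOn l (Icc a q) := by
    intro u hu v hv huv
    have hav : a ≤ v := le_trans hu.1 huv
    have huseg : u ∈ segment ℝ a v := by
      rw [segment_eq_Icc hav]; exact ⟨hu.1, huv⟩
    obtain ⟨c, e, hc0, he0, hce, hval⟩ := huseg
    have hvQ : v ∈ Icc p q := ⟨le_trans haI.1 hav, hv.2⟩
    calc l v = c * l v + e * l v := by rw [← add_mul, hce, one_mul]
      _ ≤ c * l a + e * l v :=
        add_le_add_left (mul_le_mul_of_nonneg_left (hmax v hvQ) hc0) _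
      _ ≤ l (c • a + e • v) := by
        have h4 := hconc.2 haI hvQ hc0 he0 hce
        simpa [smul_eq_mul] using h4
      _ = l u := by rw [hval]
  refine ⟨a, ?_, ?_⟩
  · intro x hx y hy hxy
    rcases le_total y p with h | h
    · exact monoA (mem_Iic.2 (le_trans hxy h)) (mem_Iic.2 h) hxy
    · rcases le_total x p with h' | h'
      · exact le_trans (monoA (mem_Iic.2 h') (mem_Iic.2 le_rfl) h')
          (monoMid ⟨le_rfl, haI.1⟩ ⟨h, hy⟩ h)
      · exact monoMid ⟨h', le_trans hxy hy⟩ ⟨h, hy⟩ hxy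
  · intro x hx y hy hxy
    rcases le_total q x with h | h
    · exact antiB (mem_Ici.2 h) (mem_Ici.2 (le_trans h hxy)) hxy
    · rcases le_total q y with h' | h'
      · exact le_trans (antiB (mem_Ici.2 le_rfl) (mem_Ici.2 h') h')
          (antiMid ⟨hx, h⟩ ⟨haI.2, le_rfl⟩ h)
      · exact antiMid ⟨hx, h⟩ ⟨le_trans hx hxy, h'⟩ hxy
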